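/- Let M be a finite set of items with m = |M| ≥ 16, let n ≥ 1 be an integer, and for each agent i ∈ {1, …, n} let V_i be a monotone subadditive valuation on subsets of M with V_i(∅) = 0 and V_i(S) ≥ 0 for every S ⊆ M. Then there exists an allocation A_1, …, A_n of M such that V_i(A_i) ≥ MMS_{V_i}^n(M) / (10 · ⌈log₂ m⌉) for every agent i. -/

import Mathlib

/-- `A` is a partition of the finite set `M` into `r` pairwise disjoint
(possibly empty) bundles whose union is `M`. -/
def IsPartition {ι : Type*} [DecidableEq ι] {r : ℕ} (M : Finset ι) (A : Fin r → Finset ι) : Prop :=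
  (∀ i j, i ≠ j → Disjoint (A i) (A j)) ∧ Finset.univ.biUnion A = M

/-- The maximin share `MMS_f^r(M)`. -/
noncomputable def MMS {ι : Type*} [DecidableEq ι] (M : Finset ι) (f : Finset ι → ℝ) (r : ℕ) : ℝ :=
  sSup { x : ℝ | ∃ A : Fin r → Finset ι, IsPartition M A ∧ x = ⨅ j, f (A j) }

/-- A valuation is subadditive. -/
def SubadditiveVal {ι : Type*} [DecidableEq ι] (V : Finset ι → ℝ) : Prop :=
  ∀ A B : Finset ι, V (A ∪ B) ≤ V A + V B


/-- For `m = |M| ≥ 16` items and any number `n ≥ 1` of agents with monotone, nonnegative,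
normalized subadditive valuations, there is an allocation giving every agent at least
`MMS_i / (10 ⌈log₂ m⌉)`. -/


private lemma sub_split {ι : Type*} [DecidableEq ι] (V : Finset ι → ℝ)
    (hsub : ∀ A B, V (A ∪ B) ≤ V A + V B) (X Y : Finset ι) :
    V X ≤ V (X \ Y) + V (X ∩ Y) := by
  conv_lhs => rw [← Finset.sdiff_union_inter X Y]
  exact hsub _ _

private lemma strip_card {ι : Type*} [DecidableEq ι] (V : Finset ι → ℝ)
    (hzero : V ∅ = 0)
    (hsub : ∀ A B, V (A ∪ B) ≤ V A + V B)
    (τ : ℝ) (hτ : 0 < τ) (s : ℕ) (hs : 1 ≤ s) :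
    ∀ (k : ℕ) (C : Finset ι),
      (∀ W : Finset ι, W ⊆ C → τ ≤ V W → s + 1 ≤ W.card) →
      (2 * (k : ℝ) - 1) * τ < V C → k * (s + 1) ≤ C.card := by
  intro k
  induction k with
  | zero => intro C _ _; simp
  | succ k IH =>
    intro C hsize hv
    classical
    have hCwit : τ ≤ V C := by push_cast at hv; nlinarith
    obtain ⟨W₀, hW₀mem, hW₀min⟩ :=
      Finset.exists_min_image (C.powerset.filter fun W => τ ≤ V W) Finset.card
        ⟨C, by simp [hCwit]⟩
    rw [Finset.mem_filter, Finset.mem_powerset] at hW₀mem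
    obtain ⟨hW₀C, hW₀τ⟩ := hW₀mem
    have hW₀ne : W₀.Nonempty := by
      rw [Finset.nonempty_iff_ne_empty]; rintro rfl; rw [hzero] at hW₀τ; linarith
    obtain ⟨g, hg⟩ := hW₀ne
    have hgC : g ∈ C := hW₀C hg
    have hsingle : V {g} < τ := by
      by_contra h
      have h2 := hsize {g} (by simpa using hgC) (le_of_not_gt h)
      simp at h2; omega
    have herase : V (W₀.erase g) < τ := by
      by_contra h
      have hmem : W₀.erase g ∈ C.powerset.filter fun W => τ ≤ V W := by
        rw [Finset.mem_filter, Finset.mem_powerset]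
        exact ⟨(Finset.erase_subset g W₀).trans hW₀C, le_of_not_gt h⟩
      have h1 := hW₀min _ hmem
      have h2 := Finset.card_erase_of_mem hg
      have h3 := Finset.card_pos.mpr ⟨g, hg⟩
      omega
    have hW₀val : V W₀ < 2 * τ := by
      have h1 : V W₀ ≤ V {g} + V (W₀.erase g) := by
        conv_lhs => rw [← Finset.insert_erase hg, Finset.insert_eq]
        exact hsub _ _
      linarith
    have hrest : (2 * (k:ℕ) - 1 : ℝ) * τ < V (C \ W₀) := by
      have h1 : V C ≤ V (C \ W₀) + V W₀ := by
        conv_lhs => rw [← Finset.sdiff_union_of_subset hW₀C]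
        exact hsub _ _
      push_cast at hv ⊢; linarith
    have hsize' : ∀ W : Finset ι, W ⊆ C \ W₀ → τ ≤ V W → s + 1 ≤ W.card :=
      fun W hW ht => hsize W (hW.trans Finset.sdiff_subset) ht
    have hIH := IH (C \ W₀) hsize' hrest
    have hW₀card : s + 1 ≤ W₀.card := hsize W₀ hW₀C hW₀τ
    have h1 : (C \ W₀).card = C.card - W₀.card := Finset.card_sdiff_of_subset hW₀C
    have h2 : W₀.card ≤ C.card := Finset.card_le_card hW₀C
    have h3 : (k+1) * (s+1) = k*(s+1) + (s+1) := by ring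
    rw [h1] at hIH
    calc (k+1)*(s+1) = k*(s+1) + (s+1) := h3
      _ ≤ (C.card - W₀.card) + W₀.card := Nat.add_le_add hIH hW₀card
      _ = C.card := by omega

private lemma telescope {ι : Type*} [DecidableEq ι] (V : Finset ι → ℝ)
    (hmono : ∀ S T : Finset ι, S ⊆ T → V S ≤ V T)
    (hsub : ∀ A B, V (A ∪ B) ≤ V A + V B) (D : ℕ → Finset ι) :
    ∀ (s : Finset ℕ) (X : Finset ι),
      V X ≤ V (X \ s.biUnion D) + ∑ a ∈ s, V (X ∩ D a) := by
  intro s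
  induction s using Finset.induction_on with
  | empty => intro X; simp
  | @insert b s hb IH =>
    intro X
    have h1 : V X ≤ V (X \ D b) + V (X ∩ D b) := sub_split V hsub X (D b)
    have h2 := IH (X \ D b)
    have h3 : V ((X \ D b) \ s.biUnion D) = V (X \ (insert b s).biUnion D) := by
      congr 1
      rw [Finset.biUnion_insert]
      ext x; simp; tauto
    have h4 : ∑ a ∈ s, V ((X \ D b) ∩ D a) ≤ ∑ a ∈ s, V (X ∩ D a) :=
      Finset.sum_le_sum fun a _ => hmono _ _ (by intro x hx; simp at hx ⊢; tauto)
    rw [Finset.sum_insert hb]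
    rw [h3] at h2
    linarith

private theorem phase2_aux {ι : Type*} [Fintype ι] [DecidableEq ι] {n : ℕ}
    (V : Fin n → Finset ι → ℝ) (τ : Fin n → ℝ)
    (hzero : ∀ i, V i ∅ = 0)
    (hmono : ∀ i, ∀ S T : Finset ι, S ⊆ T → V i S ≤ V i T)
    (hsub : ∀ i, ∀ A B : Finset ι, V i (A ∪ B) ≤ V i A + V i B)
    (L r₀ : ℕ) (hL : 2 ≤ L) (hcard : Fintype.card ι ≤ 2^L) (R : Finset ι) :
    ∀ (fuel : ℕ) (J : Finset (Fin n)) (c : ℕ) (D : ℕ → Finset ι) (k : ℕ → ℕ),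
    1 ≤ c → c ≤ L →
    (∀ a, D a ⊆ R) → (∀ a, c < a → D a = ∅) → (D 0 = ∅) →
    (∀ a a', a ≠ a' → Disjoint (D a) (D a')) →
    (∀ a, (D a).card ≤ k a * 2^a) →
    ((∑ a ∈ Finset.range (L+1), k a) + J.card ≤ r₀) →
    (∀ a, 1 ≤ a → a ≤ c → ∀ i ∈ J, ∀ W : Finset ι,
        W ⊆ R \ (Finset.range a).biUnion D → τ i ≤ V i W → 2^(a-1) < W.card) →
    (∀ i ∈ J, 0 < τ i) →
    (∀ i ∈ J, ∃ Q : Fin r₀ → Finset ι, (∀ j, Q j ⊆ R) ∧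
        (∀ j j', j ≠ j' → Disjoint (Q j) (Q j')) ∧
        (∀ j, (10*(L:ℝ) - 1/2) * τ i < V i (Q j))) →
    fuel = J.card * (L+1) + (L - c) →
    ∃ A : Fin n → Finset ι,
      (∀ i ∈ J, A i ⊆ R \ (Finset.range (L+1)).biUnion D) ∧
      (∀ i ∈ J, ∀ i' ∈ J, i ≠ i' → Disjoint (A i) (A i')) ∧
      (∀ i ∈ J, τ i ≤ V i (A i)) := by
  intro fuel
  induction fuel using Nat.strong_induction_on with
  | _ fuel IH =>
  intro J c D k hc1 hcL hDR hDhigh hD0 hDdisj hDcard hksum hI5 hτpos hpack hfuel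
  classical
  by_cases hserve : ∃ i ∈ J, ∃ T ⊆ R \ (Finset.range (L+1)).biUnion D,
      T.card ≤ 2^c ∧ τ i ≤ V i T
  · -- serve agent i with piece T at scale c
    obtain ⟨i, hiJ, T, hTsub, hTcard, hTval⟩ := hserve
    set D' : ℕ → Finset ι := Function.update D c (D c ∪ T) with hD'def
    set k' : ℕ → ℕ := Function.update k c (k c + 1) with hk'def
    set J' : Finset (Fin n) := J.erase i with hJ'def
    have hcmem : c ∈ Finset.range (L+1) := by simp; omega
    have hTR : T ⊆ R := hTsub.trans Finset.sdiff_subset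
    have hTnotin : ∀ a, a ≤ L → Disjoint T (D a) := by
      intro a ha
      rw [Finset.disjoint_left]
      intro x hxT hxD
      have hx2 := hTsub hxT
      rw [Finset.mem_sdiff] at hx2
      exact hx2.2 (Finset.mem_biUnion.mpr ⟨a, by simp; omega, hxD⟩)
    have hDsub' : ∀ a, D a ⊆ D' a := by
      intro a
      by_cases h : a = c
      · subst h; rw [hD'def, Function.update_self]; exact Finset.subset_union_left
      · rw [hD'def, Function.update_of_ne h]
    have hJ'card : J'.card = J.card - 1 := Finset.card_erase_of_mem hiJ
    have hJpos : 1 ≤ J.card := Finset.card_pos.mpr ⟨i, hiJ⟩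
    have hfuel' : J'.card * (L+1) + (L - c) < fuel := by
      rw [hfuel, hJ'card]
      have h1 : (J.card - 1) * (L+1) < J.card * (L+1) :=
        (Nat.mul_lt_mul_right (by omega)).mpr (by omega)
      omega
    have hregion_sub : R \ (Finset.range (L+1)).biUnion D' ⊆
        R \ (Finset.range (L+1)).biUnion D := by
      intro x hx
      rw [Finset.mem_sdiff] at hx ⊢
      refine ⟨hx.1, fun hmem => hx.2 ?_⟩
      rw [Finset.mem_biUnion] at hmem ⊢
      obtain ⟨a, ha, hxa⟩ := hmem
      exact ⟨a, ha, hDsub' a hxa⟩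
    have hmain := IH (J'.card * (L+1) + (L - c)) hfuel' J' c D' k' hc1 hcL
      (by -- D' a ⊆ R
        intro a
        by_cases h : a = c
        · subst h; rw [hD'def, Function.update_self]
          exact Finset.union_subset (hDR a) hTR
        · rw [hD'def, Function.update_of_ne h]; exact hDR a)
      (by -- high empty
        intro a ha
        rw [hD'def, Function.update_of_ne (by omega)]
        exact hDhigh a ha)
      (by rw [hD'def, Function.update_of_ne (by omega)]; exact hD0)
      (by -- pairwise disjoint
        intro a a' hne
        have key : ∀ b b', b ≠ b' → b ≠ c → Disjoint (D' b) (D' b') := by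
          intro b b' hbb hbc
          rw [hD'def, Function.update_of_ne hbc]
          by_cases h' : b' = c
          · subst h'; rw [Function.update_self]
            rw [Finset.disjoint_union_right]
            refine ⟨hDdisj b b' hbb, ?_⟩
            by_cases hbL : b ≤ L
            · exact (hTnotin b hbL).symm
            · rw [hDhigh b (by omega)]; exact Finset.disjoint_empty_left _
          · rw [Function.update_of_ne h']; exact hDdisj b b' hbb
        by_cases h : a = c
        · subst h; exact ((key a' a hne.symm) (fun hc' => hne (hc'.symm)) ).symm
        · exact key a a' hne h)
      (by -- card bound
        intro a
        by_cases h : a = c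
        · subst h
          rw [hD'def, hk'def, Function.update_self, Function.update_self]
          calc (D a ∪ T).card ≤ (D a).card + T.card := Finset.card_union_le _ _
            _ ≤ k a * 2^a + 2^a := Nat.add_le_add (hDcard a) hTcard
            _ = (k a + 1) * 2^a := by ring
        · rw [hD'def, hk'def, Function.update_of_ne h, Function.update_of_ne h]
          exact hDcard a)
      (by -- sum bound
        have h1 : ∑ a ∈ Finset.range (L+1), k' a
            = (k c + 1) + ∑ a ∈ (Finset.range (L+1)).erase c, k a := by
          rw [hk'def, Finset.sum_update_of_mem hcmem]
          congr 1
          apply Finset.sum_congr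
          · rw [Finset.sdiff_singleton_eq_erase]
          · intros; rfl
        have h2 : ∑ a ∈ Finset.range (L+1), k a
            = k c + ∑ a ∈ (Finset.range (L+1)).erase c, k a :=
          (Finset.add_sum_erase _ k hcmem).symm
        rw [h1, hJ'card]
        omega)
      (by -- I5
        intro a ha1 hac i'' hi'' W hWsub hWval
        have hDeq : (Finset.range a).biUnion D' = (Finset.range a).biUnion D := by
          apply Finset.biUnion_congr rfl
          intro b hb
          rw [Finset.mem_range] at hb
          rw [hD'def, Function.update_of_ne (by omega)]
        rw [hDeq] at hWsub
        exact hI5 a ha1 hac i'' (Finset.mem_of_mem_erase hi'') W hWsub hWval)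
      (fun i'' hi'' => hτpos i'' (Finset.mem_of_mem_erase hi''))
      (fun i'' hi'' => hpack i'' (Finset.mem_of_mem_erase hi''))
      rfl
    obtain ⟨A', hA'sub, hA'disj, hA'val⟩ := hmain
    refine ⟨Function.update A' i T, ?_, ?_, ?_⟩
    · intro i'' hi''
      by_cases h : i'' = i
      · subst h; rw [Function.update_self]; exact hTsub
      · rw [Function.update_of_ne h]
        exact (hA'sub i'' (Finset.mem_erase.mpr ⟨h, hi''⟩)).trans hregion_sub
    · intro i₁ h₁ i₂ h₂ hne
      have hTdisj : ∀ i'' ∈ J', Disjoint T (A' i'') := by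
        intro i'' hi''
        rw [Finset.disjoint_left]
        intro x hxT hxA
        have hx2 := hA'sub i'' hi'' hxA
        rw [Finset.mem_sdiff] at hx2
        apply hx2.2
        rw [Finset.mem_biUnion]
        refine ⟨c, hcmem, ?_⟩
        rw [hD'def, Function.update_self]
        exact Finset.mem_union_right _ hxT
      by_cases e₁ : i₁ = i
      · subst e₁
        rw [Function.update_self, Function.update_of_ne (fun h => hne h.symm)]
        exact hTdisj i₂ (Finset.mem_erase.mpr ⟨fun h => hne h.symm, h₂⟩)
      · by_cases e₂ : i₂ = i
        · subst e₂
          rw [Function.update_self, Function.update_of_ne e₁]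
          exact (hTdisj i₁ (Finset.mem_erase.mpr ⟨e₁, h₁⟩)).symm
        · rw [Function.update_of_ne e₁, Function.update_of_ne e₂]
          exact hA'disj i₁ (Finset.mem_erase.mpr ⟨e₁, h₁⟩)
            i₂ (Finset.mem_erase.mpr ⟨e₂, h₂⟩) hne
    · intro i'' hi''
      by_cases h : i'' = i
      · subst h; rw [Function.update_self]; exact hTval
      · rw [Function.update_of_ne h]
        exact hA'val i'' (Finset.mem_erase.mpr ⟨h, hi''⟩)
  · -- no serve possible at scale c
    by_cases hcL' : c < L
    · -- advance the scale
      have hfuel' : J.card * (L+1) + (L - (c+1)) < fuel := by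
        rw [hfuel]
        have : L - (c+1) < L - c := by omega
        omega
      apply IH (J.card * (L+1) + (L - (c+1))) hfuel' J (c+1) D k (by omega) (by omega)
        hDR (fun a ha => hDhigh a (by omega)) hD0 hDdisj hDcard hksum
        (by
          intro a ha1 hac i'' hi'' W hWsub hWval
          by_cases h : a ≤ c
          · exact hI5 a ha1 h i'' hi'' W hWsub hWval
          · have hac' : a = c + 1 := by omega
            subst hac'
            have hWreg : W ⊆ R \ (Finset.range (L+1)).biUnion D := by
              intro x hxW
              have hx := hWsub hxW
              rw [Finset.mem_sdiff] at hx ⊢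
              refine ⟨hx.1, fun hmem => ?_⟩
              rw [Finset.mem_biUnion] at hmem
              obtain ⟨b, hb, hxb⟩ := hmem
              rw [Finset.mem_range] at hb
              by_cases hbc : b < c + 1
              · exact hx.2 (Finset.mem_biUnion.mpr ⟨b, by simp [hbc], hxb⟩)
              · rw [hDhigh b (by omega)] at hxb; simp at hxb
            by_contra hcon
            push_neg at hcon
            apply hserve
            refine ⟨i'', hi'', W, hWreg, ?_, hWval⟩
            have : c + 1 - 1 = c := by omega
            rw [this] at hcon
            exact hcon
          )
        hτpos hpack rfl
    · -- c = L : no agent can be left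
      have hcEq : c = L := by omega
      by_cases hJ : J = ∅
      · exact ⟨fun _ => ∅, by simp [hJ], by simp [hJ], by simp [hJ]⟩
      · exfalso
        obtain ⟨i, hiJ⟩ := Finset.nonempty_iff_ne_empty.mpr hJ
        obtain ⟨Q, hQR, hQdisj, hQval⟩ := hpack i hiJ
        have hτi : 0 < τ i := hτpos i hiJ
        -- everything left has small value
        have hsmall : ∀ S : Finset ι, S ⊆ R \ (Finset.range (L+1)).biUnion D →
            V i S < τ i := by
          intro S hS
          by_contra h
          apply hserve
          refine ⟨i, hiJ, S, hS, ?_, le_of_not_gt h⟩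
          rw [hcEq]
          exact le_trans (le_trans (Finset.card_le_univ S) (by simp)) hcard
        -- per bundle: find a critical scale
        have hbundle : ∀ j : Fin r₀, ∃ a, (1 ≤ a ∧ a ≤ L) ∧
            5 * (2^(a-1)+1) ≤ ((Q j) ∩ D a).card := by
          intro j
          have htel := telescope (V i) (hmono i) (hsub i) D (Finset.range (L+1)) (Q j)
          have hsm : V i ((Q j) \ (Finset.range (L+1)).biUnion D) < τ i := by
            apply hsmall
            exact Finset.sdiff_subset_sdiff (hQR j) le_rfl
          -- split the sum
          have hsplit : Finset.range (L+1) = insert 0 (Finset.Icc 1 L) := by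
            ext a; simp [Finset.mem_Icc]; omega
          have h0 : V i ((Q j) ∩ D 0) = 0 := by rw [hD0, Finset.inter_empty, hzero]
          have hsum : ∑ a ∈ Finset.range (L+1), V i ((Q j) ∩ D a)
              = ∑ a ∈ Finset.Icc 1 L, V i ((Q j) ∩ D a) := by
            rw [hsplit, Finset.sum_insert (by simp), h0, zero_add]
          -- pigeonhole
          by_contra hcon
          push_neg at hcon
          have hbound : ∀ a ∈ Finset.Icc 1 L, V i ((Q j) ∩ D a) ≤ 9 * τ i := by
            intro a ha
            rw [Finset.mem_Icc] at ha
            by_contra h9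
            push_neg at h9
            have hsizeW : ∀ W : Finset ι, W ⊆ (Q j) ∩ D a → τ i ≤ V i W →
                2^(a-1) + 1 ≤ W.card := by
              intro W hW hWv
              have hWsub : W ⊆ R \ (Finset.range a).biUnion D := by
                intro x hxW
                have hx := hW hxW
                rw [Finset.mem_inter] at hx
                rw [Finset.mem_sdiff]
                refine ⟨hDR a hx.2, fun hmem => ?_⟩
                rw [Finset.mem_biUnion] at hmem
                obtain ⟨b, hb, hxb⟩ := hmem
                rw [Finset.mem_range] at hb
                exact (Finset.disjoint_left.mp (hDdisj a b (by omega)) hx.2) hxb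
              have := hI5 a ha.1 (by omega) i hiJ W hWsub hWv
              omega
            have hstrip := strip_card (V i) (hzero i) (hsub i) (τ i) hτi
              (2^(a-1)) (Nat.one_le_two_pow) 5 ((Q j) ∩ D a) hsizeW
              (by push_cast; linarith)
            have := hcon a ⟨ha.1, ha.2⟩
            omega
          have hsumle : ∑ a ∈ Finset.Icc 1 L, V i ((Q j) ∩ D a)
              ≤ (L : ℝ) * (9 * τ i) := by
            calc ∑ a ∈ Finset.Icc 1 L, V i ((Q j) ∩ D a)
                ≤ (Finset.Icc 1 L).card • (9 * τ i) :=
                  Finset.sum_le_card_nsmul _ _ _ hbound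
              _ = (L:ℝ) * (9 * τ i) := by
                  rw [Nat.card_Icc]; simp [nsmul_eq_mul]
          have hQv := hQval j
          have hLR : (2:ℝ) ≤ (L:ℝ) := by exact_mod_cast hL
          rw [hsum] at htel
          nlinarith
        choose F hF1 hF2 using hbundle
        -- fiber counting
        have hfiber : ∀ a ∈ Finset.Icc 1 L,
            5 * ((Finset.univ.filter fun j => F j = a).card) ≤ 2 * k a := by
          intro a ha
          rw [Finset.mem_Icc] at ha
          set s := Finset.univ.filter fun j : Fin r₀ => F j = a with hsdef
          have hdisjQ : ∀ j ∈ s, ∀ j' ∈ s, j ≠ j' →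
              Disjoint ((Q j) ∩ D a) ((Q j') ∩ D a) := by
            intro j _ j' _ hne
            exact Finset.disjoint_of_subset_left Finset.inter_subset_left
              (Finset.disjoint_of_subset_right Finset.inter_subset_left
                (hQdisj j j' hne))
          have h1 : ∑ j ∈ s, ((Q j) ∩ D a).card
              = (s.biUnion fun j => (Q j) ∩ D a).card :=
            (Finset.card_biUnion hdisjQ).symm
          have h2 : (s.biUnion fun j => (Q j) ∩ D a) ⊆ D a := by
            apply Finset.biUnion_subset.mpr
            intro j _
            exact Finset.inter_subset_right
          have h3 : s.card * (5 * (2^(a-1)+1)) ≤ ∑ j ∈ s, ((Q j) ∩ D a).card := by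
            have := Finset.card_nsmul_le_sum s (fun j => ((Q j) ∩ D a).card)
              (5 * (2^(a-1)+1)) ?_
            · simpa [smul_eq_mul] using this
            · intro j hj
              rw [hsdef, Finset.mem_filter] at hj
              have := hF2 j
              rw [hj.2] at this
              exact this
          have h4 : s.card * (5 * (2^(a-1)+1)) ≤ k a * 2^a := by
            calc s.card * (5 * (2^(a-1)+1)) ≤ ∑ j ∈ s, ((Q j) ∩ D a).card := h3
              _ = (s.biUnion fun j => (Q j) ∩ D a).card := h1
              _ ≤ (D a).card := Finset.card_le_card h2
              _ ≤ k a * 2^a := hDcard a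
          have hpow : 2^a = 2 * 2^(a-1) := by
            rw [← pow_succ']; congr 1; omega
          rw [hpow] at h4
          have h5 : s.card * (5 * (2^(a-1)+1)) = (5 * s.card) * (2^(a-1)+1) := by ring
          have h6 : k a * (2 * 2^(a-1)) ≤ (2 * k a) * (2^(a-1)+1) := by
            have : k a * (2 * 2^(a-1)) = (2 * k a) * 2^(a-1) := by ring
            rw [this]
            exact Nat.mul_le_mul_left _ (by omega)
          have h7 : (5 * s.card) * (2^(a-1)+1) ≤ (2 * k a) * (2^(a-1)+1) := by
            rw [← h5]; exact le_trans h4 h6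
          exact Nat.le_of_mul_le_mul_right h7 (by positivity)
        have hfibsum : ∑ a ∈ Finset.Icc 1 L,
            (Finset.univ.filter fun j : Fin r₀ => F j = a).card = r₀ := by
          have := Finset.card_eq_sum_card_fiberwise
            (f := F) (s := Finset.univ) (t := Finset.Icc 1 L)
            (fun j _ => by have := hF1 j; rw [Finset.mem_coe, Finset.mem_Icc]; omega)
          simpa using this.symm
        have hsum5 : 5 * r₀ ≤ 2 * ∑ a ∈ Finset.Icc 1 L, k a := by
          calc 5 * r₀ = ∑ a ∈ Finset.Icc 1 L,
                5 * (Finset.univ.filter fun j : Fin r₀ => F j = a).card := by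
                rw [← Finset.mul_sum, hfibsum]
            _ ≤ ∑ a ∈ Finset.Icc 1 L, 2 * k a := Finset.sum_le_sum hfiber
            _ = 2 * ∑ a ∈ Finset.Icc 1 L, k a := by rw [Finset.mul_sum]
        have hsub2 : ∑ a ∈ Finset.Icc 1 L, k a ≤ ∑ a ∈ Finset.range (L+1), k a :=
          Finset.sum_le_sum_of_subset (by intro a ha; rw [Finset.mem_Icc] at ha; simp; omega)
        have hJpos : 1 ≤ J.card := Finset.card_pos.mpr ⟨i, hiJ⟩
        omega

private theorem phase1_aux {ι : Type*} [Fintype ι] [DecidableEq ι] {n : ℕ}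
    (V : Fin n → Finset ι → ℝ) (τ : Fin n → ℝ)
    (hzero : ∀ i, V i ∅ = 0)
    (hmono : ∀ i, ∀ S T : Finset ι, S ⊆ T → V i S ≤ V i T)
    (hsub : ∀ i, ∀ A B : Finset ι, V i (A ∪ B) ≤ V i A + V i B)
    (L : ℕ) (hL : 2 ≤ L) (hcard : Fintype.card ι ≤ 2^L) :
    ∀ (N : ℕ) (I : Finset (Fin n)) (R : Finset ι), I.card = N →
    (∀ i ∈ I, 0 < τ i) →
    (∀ i ∈ I, ∃ Q : Fin I.card → Finset ι, (∀ j, Q j ⊆ R) ∧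
        (∀ j j', j ≠ j' → Disjoint (Q j) (Q j')) ∧
        (∀ j, (10*(L:ℝ) - 1/2) * τ i < V i (Q j))) →
    ∃ A : Fin n → Finset ι, (∀ i ∈ I, A i ⊆ R) ∧
      (∀ i ∈ I, ∀ i' ∈ I, i ≠ i' → Disjoint (A i) (A i')) ∧
      (∀ i ∈ I, τ i ≤ V i (A i)) := by
  intro N
  induction N with
  | zero =>
    intro I R hIcard _ _
    have hIe : I = ∅ := Finset.card_eq_zero.mp hIcard
    exact ⟨fun _ => ∅, by simp [hIe], by simp [hIe], by simp [hIe]⟩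
  | succ N IHN =>
    intro I R hIcard hτpos hpack
    classical
    by_cases hs : ∃ i ∈ I, ∃ g ∈ R, τ i ≤ V i {g}
    · -- serve a single item
      obtain ⟨i, hiI, g, hgR, hval⟩ := hs
      set I' : Finset (Fin n) := I.erase i with hI'def
      have hI'card : I'.card = N := by
        rw [hI'def, Finset.card_erase_of_mem hiI, hIcard]
        omega
      -- packings for I'
      have hpack' : ∀ i' ∈ I', ∃ Q : Fin I'.card → Finset ι,
          (∀ j, Q j ⊆ R.erase g) ∧
          (∀ j j', j ≠ j' → Disjoint (Q j) (Q j')) ∧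
          (∀ j, (10*(L:ℝ) - 1/2) * τ i' < V i' (Q j)) := by
        intro i' hi'
        obtain ⟨Q, hQR, hQdisj, hQval⟩ := hpack i' (Finset.mem_of_mem_erase hi')
        set S : Finset (Fin I.card) := Finset.univ.filter (fun j => g ∉ Q j) with hSdef
        have hScard : I'.card ≤ S.card := by
          have hcompl : (Finset.univ.filter (fun j : Fin I.card => g ∈ Q j)).card ≤ 1 := by
            rw [Finset.card_le_one]
            intro j hj j' hj'
            rw [Finset.mem_filter] at hj hj'
            by_contra hne
            exact (Finset.disjoint_left.mp (hQdisj j j' hne) hj.2) hj'.2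
          have hsplit := Finset.card_filter_add_card_filter_not
            (s := Finset.univ) (p := fun j : Fin I.card => g ∈ Q j)
          have huniv : (Finset.univ : Finset (Fin I.card)).card = I.card := by simp
          have hSeq : S = Finset.univ.filter (fun j : Fin I.card => ¬ (g ∈ Q j)) := rfl
          rw [hI'def, Finset.card_erase_of_mem hiI, hSeq]
          omega
        set emb := S.orderEmbOfCardLe hScard with hembdef
        refine ⟨fun j => Q (emb j), ?_, ?_, ?_⟩
        · intro j
          have hmem : emb j ∈ S := Finset.orderEmbOfCardLe_mem S hScard j
          rw [hSdef, Finset.mem_filter] at hmem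
          exact Finset.subset_erase.mpr ⟨hQR _, hmem.2⟩
        · intro j j' hne
          exact hQdisj _ _ (fun h => hne (emb.injective h))
        · intro j; exact hQval _
      obtain ⟨A', hA'sub, hA'disj, hA'val⟩ := IHN I' (R.erase g) hI'card
        (fun i' hi' => hτpos i' (Finset.mem_of_mem_erase hi')) hpack'
      refine ⟨Function.update A' i {g}, ?_, ?_, ?_⟩
      · intro i'' hi''
        by_cases h : i'' = i
        · subst h; rw [Function.update_self]; simpa using hgR
        · rw [Function.update_of_ne h]
          exact (hA'sub i'' (Finset.mem_erase.mpr ⟨h, hi''⟩)).trans (Finset.erase_subset g R)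
      · intro i₁ h₁ i₂ h₂ hne
        have hdisj' : ∀ i'' ∈ I', Disjoint ({g} : Finset ι) (A' i'') := by
          intro i'' hi''
          rw [Finset.disjoint_singleton_left]
          intro hgmem
          have := hA'sub i'' hi'' hgmem
          simp [Finset.mem_erase] at this
        by_cases e₁ : i₁ = i
        · subst e₁
          rw [Function.update_self, Function.update_of_ne (fun h => hne h.symm)]
          exact hdisj' i₂ (Finset.mem_erase.mpr ⟨fun h => hne h.symm, h₂⟩)
        · by_cases e₂ : i₂ = i
          · subst e₂
            rw [Function.update_self, Function.update_of_ne e₁]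
            exact (hdisj' i₁ (Finset.mem_erase.mpr ⟨e₁, h₁⟩)).symm
          · rw [Function.update_of_ne e₁, Function.update_of_ne e₂]
            exact hA'disj i₁ (Finset.mem_erase.mpr ⟨e₁, h₁⟩)
              i₂ (Finset.mem_erase.mpr ⟨e₂, h₂⟩) hne
      · intro i'' hi''
        by_cases h : i'' = i
        · subst h; rw [Function.update_self]; exact hval
        · rw [Function.update_of_ne h]
          exact hA'val i'' (Finset.mem_erase.mpr ⟨h, hi''⟩)
    · -- no single-item witness: run phase 2
      push_neg at hs
      have h2 := phase2_aux V τ hzero hmono hsub L I.card hL hcard R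
        (I.card * (L+1) + (L - 1)) I 1 (fun _ => ∅) (fun _ => 0)
        le_rfl (by omega)
        (fun a => Finset.empty_subset R) (fun a _ => rfl) rfl
        (fun a a' _ => Finset.disjoint_empty_left _)
        (by intro a; simp)
        (by simp)
        (by -- I5 at scale 1
          intro a ha1 hac i hiI W hWsub hWval
          have ha : a = 1 := by omega
          subst ha
          have hWR : W ⊆ R := by
            intro x hx
            have := hWsub hx
            rw [Finset.mem_sdiff] at this
            exact this.1
          by_contra hcon
          push_neg at hcon
          norm_num at hcon
          have h01 : W.card = 0 ∨ W.card = 1 := by omega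
          rcases h01 with hW | hW
          · have hWe : W = ∅ := Finset.card_eq_zero.mp hW
            subst hWe
            rw [hzero i] at hWval
            exact absurd hWval (not_le.mpr (hτpos i hiI))
          · obtain ⟨x, hx⟩ := Finset.card_eq_one.mp hW
            subst hx
            exact absurd hWval (not_le.mpr (hs i hiI x (hWR (Finset.mem_singleton_self x)))))
        hτpos
        (by
          intro i hiI
          obtain ⟨Q, h1, h2, h3⟩ := hpack i hiI
          exact ⟨Q, h1, h2, h3⟩)
        rfl
      obtain ⟨A, hAsub, hAdisj, hAval⟩ := h2
      refine ⟨A, ?_, hAdisj, hAval⟩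
      intro i hiI
      exact (hAsub i hiI).trans Finset.sdiff_subset


/-- For `m = |M| ≥ 16` items and any number `n ≥ 1` of agents with monotone, nonnegative,
normalized subadditive valuations, there is an allocation giving every agent at least
`MMS_i / (10 ⌈log₂ m⌉)`. -/
theorem exists_log_MMS_allocation_subadditive {ι : Type*} [Fintype ι] [DecidableEq ι]
    (hm : 16 ≤ Fintype.card ι) {n : ℕ} (hn : 1 ≤ n)
    (V : Fin n → Finset ι → ℝ)
    (hzero : ∀ i, V i ∅ = 0)
    (hnonneg : ∀ i (S : Finset ι), 0 ≤ V i S)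
    (hmono : ∀ i, ∀ S T : Finset ι, S ⊆ T → V i S ≤ V i T)
    (hsub : ∀ i, SubadditiveVal (V i)) :
    ∃ A : Fin n → Finset ι, IsPartition (Finset.univ : Finset ι) A ∧
      ∀ i, MMS Finset.univ (V i) n / (10 * (Nat.clog 2 (Fintype.card ι) : ℝ)) ≤ V i (A i) := by
  classical
  set L : ℕ := Nat.clog 2 (Fintype.card ι) with hLdef
  have hL2 : 2 ≤ L := by
    by_contra h
    push_neg at h
    have h2 : Fintype.card ι ≤ 2^1 :=
      (Nat.clog_le_iff_le_pow (by norm_num)).mp (by omega)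
    norm_num at h2
    omega
  have hcard2 : Fintype.card ι ≤ 2^L := Nat.le_pow_clog (by norm_num) _
  have hLpos : (0:ℝ) < 10 * (L:ℝ) := by
    have : (2:ℝ) ≤ (L:ℝ) := by exact_mod_cast hL2
    linarith
  set μ : Fin n → ℝ := fun i => MMS Finset.univ (V i) n with hμdef
  set τ : Fin n → ℝ := fun i => μ i / (10 * (L:ℝ)) with hτdef
  have hμτ : ∀ i, μ i = 10 * (L:ℝ) * τ i := by
    intro i
    rw [hτdef]
    field_simp
  set i0 : Fin n := ⟨0, hn⟩ with hi0def
  -- the set in MMS is nonempty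
  have hSne : ∀ i : Fin n, { x : ℝ | ∃ A : Fin n → Finset ι,
      IsPartition (Finset.univ : Finset ι) A ∧ x = ⨅ j, V i (A j) }.Nonempty := by
    intro i
    refine ⟨⨅ j, V i ((fun j' => if j' = i0 then (Finset.univ : Finset ι) else ∅) j), ?_⟩
    refine ⟨_, ⟨?_, ?_⟩, rfl⟩
    · intro a b hab
      by_cases ha : a = i0 <;> by_cases hb : b = i0
      · exact absurd (ha.trans hb.symm) hab
      · simp [ha, hb]
      · simp [ha, hb]
      · simp [ha, hb]
    · apply Finset.Subset.antisymm
      · intro x hx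
        rw [Finset.mem_biUnion] at hx
        obtain ⟨j, _, hj⟩ := hx
        by_cases h : j = i0 <;> simp [h] at hj <;> simp
      · intro x _
        rw [Finset.mem_biUnion]
        exact ⟨i0, Finset.mem_univ _, by simp⟩
  set I₀ : Finset (Fin n) := Finset.univ.filter (fun i => 0 < μ i) with hI₀def
  have hτpos : ∀ i ∈ I₀, 0 < τ i := by
    intro i hi
    rw [hI₀def, Finset.mem_filter] at hi
    rw [hτdef]
    exact div_pos hi.2 hLpos
  have hpack : ∀ i ∈ I₀, ∃ Q : Fin I₀.card → Finset ι,
      (∀ j, Q j ⊆ (Finset.univ : Finset ι)) ∧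
      (∀ j j', j ≠ j' → Disjoint (Q j) (Q j')) ∧
      (∀ j, (10*(L:ℝ) - 1/2) * τ i < V i (Q j)) := by
    intro i hi
    have hτi : 0 < τ i := hτpos i hi
    have hlt : μ i - τ i / 2 < sSup { x : ℝ | ∃ A : Fin n → Finset ι,
        IsPartition (Finset.univ : Finset ι) A ∧ x = ⨅ j, V i (A j) } := by
      have : sSup { x : ℝ | ∃ A : Fin n → Finset ι,
          IsPartition (Finset.univ : Finset ι) A ∧ x = ⨅ j, V i (A j) } = μ i := rfl
      rw [this]
      linarith
    obtain ⟨x, hxmem, hxlt⟩ := exists_lt_of_lt_csSup (hSne i) hlt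
    obtain ⟨A, hApart, hxeq⟩ := hxmem
    have hbdd : BddBelow (Set.range fun j => V i (A j)) :=
      (Set.finite_range _).bddBelow
    have hA : ∀ j : Fin n, μ i - τ i / 2 < V i (A j) := by
      intro j
      calc μ i - τ i / 2 < x := hxlt
        _ ≤ V i (A j) := by rw [hxeq]; exact ciInf_le hbdd j
    have hcardle : I₀.card ≤ n := by
      have := Finset.card_le_univ I₀
      simpa using this
    refine ⟨fun j => A (Fin.castLE hcardle j), fun j => Finset.subset_univ _, ?_, ?_⟩
    · intro j j' hne
      exact hApart.1 _ _ (fun h => hne (Fin.castLE_injective hcardle h))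
    · intro j
      have := hA (Fin.castLE hcardle j)
      have heq : (10*(L:ℝ) - 1/2) * τ i = μ i - τ i / 2 := by
        rw [hμτ i]; ring
      rw [heq]
      exact this
  obtain ⟨A, hAsub, hAdisj, hAval⟩ := phase1_aux V τ hzero hmono
    (fun i A B => hsub i A B) L hL2 hcard2 I₀.card I₀ Finset.univ rfl hτpos hpack
  -- assemble the final allocation
  set W : Finset ι := I₀.biUnion (fun i => A i) with hWdef
  set Afin : Fin n → Finset ι := fun i =>
    (if i ∈ I₀ then A i else ∅) ∪ (if i = i0 then Finset.univ \ W else ∅) with hAfindef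
  have hAsubW : ∀ i ∈ I₀, A i ⊆ W := by
    intro i hi
    exact Finset.subset_biUnion_of_mem (fun i => A i) hi
  refine ⟨Afin, ⟨?_, ?_⟩, ?_⟩
  · -- pairwise disjoint
    intro a b hab
    rw [hAfindef]
    simp only
    rw [Finset.disjoint_union_left]
    constructor
    · rw [Finset.disjoint_union_right]
      constructor
      · by_cases ha : a ∈ I₀ <;> by_cases hb : b ∈ I₀
        · simp only [if_pos ha, if_pos hb]
          exact hAdisj a ha b hb hab
        · simp [ha, hb]
        · simp [ha, hb]
        · simp [ha, hb]
      · by_cases hb : b = i0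
        · simp only [if_pos hb]
          by_cases ha : a ∈ I₀
          · simp only [if_pos ha]
            exact Finset.disjoint_left.mpr
              (fun x hx hmem => (Finset.mem_sdiff.mp hmem).2 (hAsubW a ha hx))
          · simp [ha]
        · simp [hb]
    · rw [Finset.disjoint_union_right]
      constructor
      · by_cases ha : a = i0
        · simp only [if_pos ha]
          by_cases hb : b ∈ I₀
          · simp only [if_pos hb]
            exact (Finset.disjoint_left.mpr
              (fun x hx hmem => (Finset.mem_sdiff.mp hmem).2 (hAsubW b hb hx))).symm
          · simp [hb]
        · simp [ha]
      · by_cases ha : a = i0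
        · have hb : ¬ (b = i0) := fun h => hab (ha.trans h.symm)
          simp [hb]
        · simp [ha]
  · -- covers univ
    apply Finset.Subset.antisymm
    · intro x hx
      exact Finset.mem_univ x
    · intro x _
      rw [Finset.mem_biUnion]
      by_cases hxW : x ∈ W
      · rw [hWdef, Finset.mem_biUnion] at hxW
        obtain ⟨i, hiI, hxi⟩ := hxW
        refine ⟨i, Finset.mem_univ _, ?_⟩
        rw [hAfindef]
        simp only
        rw [if_pos hiI]
        exact Finset.mem_union_left _ hxi
      · refine ⟨i0, Finset.mem_univ _, ?_⟩
        rw [hAfindef]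
        simp [hxW]
  · -- values
    intro i
    show μ i / (10 * (L:ℝ)) ≤ V i (Afin i)
    by_cases hi : i ∈ I₀
    · have h1 : τ i ≤ V i (A i) := hAval i hi
      have h2 : A i ⊆ Afin i := by
        rw [hAfindef]
        simp only
        rw [if_pos hi]
        exact Finset.subset_union_left
      calc μ i / (10 * (L:ℝ)) = τ i := rfl
        _ ≤ V i (A i) := h1
        _ ≤ V i (Afin i) := hmono i _ _ h2
    · have hμle : μ i ≤ 0 := by
        rw [hI₀def, Finset.mem_filter] at hi
        push_neg at hi
        exact hi (Finset.mem_univ i)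
      have : μ i / (10 * (L:ℝ)) ≤ 0 :=
        div_nonpos_iff.mpr (Or.inr ⟨hμle, le_of_lt hLpos⟩)
      exact this.trans (hnonneg i _)
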